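/- Suppose every coupling J_B (B ∈ 𝔅) is independently Gaussian with mean J_{0,B} ∈ ℝ and variance Λ_B² > 0. Fix A ∈ 𝔅. Then the quenched average E[ (J_{0,A} − J_A) ⟨σ_A⟩_J ]_{{J_{0,B}, Λ_B²}} satisfies E[ (J_{0,A} − J_A) ⟨σ_A⟩_J ]_{{J_{0,B}, Λ_B²}} ≥ E[ −J_A tanh(β J_A) ]_{{0, Λ_A²}}, where the right-hand side is the expectation of −x tanh(β x) under a centered Gaussian with variance Λ_A² and is independent of all means J_{0,B} and of all other interactions. -/

import Mathlib

open MeasureTheory Real Finset ProbabilityTheory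

/-- The spin value of a Boolean: `true ↦ 1`, `false ↦ -1`. -/
noncomputable def spinVal (b : Bool) : ℝ := if b then 1 else -1

/-- `σ_B = ∏ i ∈ B, σ_i`. -/
noncomputable def sigmaSet {V : Type} (σ : V → Bool) (B : Finset V) : ℝ :=
  ∏ i ∈ B, spinVal (σ i)

/-- The Gibbs (thermal) average `⟨σ_A⟩_J` at inverse temperature `β` for the Hamiltonian
`H(σ) = -∑_{B ∈ ℬ} J_B σ_B`. -/
noncomputable def gibbsAvg {V : Type} [Fintype V] [DecidableEq V] (β : ℝ)
    (ℬ : Finset (Finset V)) (J : ℬ → ℝ) (A : Finset V) : ℝ :=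
  (∑ σ : V → Bool, sigmaSet σ A * Real.exp (β * ∑ B : ℬ, J B * sigmaSet σ (B : Finset V))) /
  (∑ σ : V → Bool, Real.exp (β * ∑ B : ℬ, J B * sigmaSet σ (B : Finset V)))

/-- The product measure of independent Gaussian couplings `J_B ~ N(J_{0,B}, Λ_B²)`. -/
noncomputable def gaussQuenched {V : Type} (ℬ : Finset (Finset V))
    (J0 : Finset V → ℝ) (Λ : Finset V → NNReal) : Measure (ℬ → ℝ) :=
  Measure.pi fun B => gaussianReal (J0 (B : Finset V)) (Λ (B : Finset V) ^ 2)


lemma tanh_eq_ratio (u : ℝ) :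
    Real.tanh u = (Real.exp (2*u) - 1) / (Real.exp (2*u) + 1) := by
  have h1 : Real.exp (2*u) = Real.exp u * Real.exp u := by rw [two_mul, Real.exp_add]
  have h2 : Real.exp u * Real.exp (-u) = 1 := by rw [← Real.exp_add]; simp
  have hc : Real.exp u + Real.exp (-u) ≠ 0 := by positivity
  have hd : Real.exp (2*u) + 1 ≠ 0 := by positivity
  rw [Real.tanh_eq_sinh_div_cosh, Real.sinh_eq, Real.cosh_eq]
  have h4 : ((rexp u - rexp (-u))/2)/((rexp u + rexp (-u))/2)
      = (rexp u - rexp (-u))/(rexp u + rexp (-u)) := by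
    field_simp
  rw [h4, div_eq_div_iff hc hd, h1]
  linear_combination (-2*rexp u) * h2

lemma abs_tanh_le_one (x : ℝ) : |Real.tanh x| ≤ 1 := by
  have hc : 0 < Real.cosh x := Real.cosh_pos x
  have h1 : Real.sinh x ≤ Real.cosh x := by nlinarith [Real.cosh_sub_sinh x, Real.exp_pos (-x)]
  have h2 : -Real.cosh x ≤ Real.sinh x := by nlinarith [Real.cosh_add_sinh x, Real.exp_pos x]
  rw [Real.tanh_eq_sinh_div_cosh, abs_div, abs_of_pos hc, div_le_one hc, abs_le]
  exact ⟨h2, h1⟩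

lemma tanh_two_point {β : ℝ} (hβ : 0 < β) (a g : ℝ) :
    g * (Real.tanh (a + β*g) - Real.tanh (a - β*g)) ≤ 2 * (g * Real.tanh (β*g)) := by
  have hca : (0:ℝ) < Real.cosh (a + β*g) := Real.cosh_pos _
  have hcb : (0:ℝ) < Real.cosh (a - β*g) := Real.cosh_pos _
  have hcg : (0:ℝ) < Real.cosh (β*g) := Real.cosh_pos _
  have hsub : Real.tanh (a + β*g) - Real.tanh (a - β*g)
      = Real.sinh (2*(β*g)) / (Real.cosh (a + β*g) * Real.cosh (a - β*g)) := by
    rw [Real.tanh_eq_sinh_div_cosh, Real.tanh_eq_sinh_div_cosh,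
      div_sub_div _ _ hca.ne' hcb.ne']
    congr 1
    rw [← Real.sinh_sub]
    congr 1; ring
  have hrhs : 2 * (g * Real.tanh (β*g)) = g * Real.sinh (2*(β*g)) / (Real.cosh (β*g))^2 := by
    rw [Real.tanh_eq_sinh_div_cosh, Real.sinh_two_mul]
    field_simp
  have hnum : 0 ≤ g * Real.sinh (2*(β*g)) := by
    rcases le_or_gt 0 g with hg | hg
    · have : (0:ℝ) ≤ Real.sinh (2*(β*g)) := by
        rw [← Real.sinh_zero, Real.sinh_le_sinh]; positivity
      exact mul_nonneg hg this
    · have h : Real.sinh (2*(β*g)) ≤ 0 := by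
        rw [← Real.sinh_zero, Real.sinh_le_sinh]; nlinarith
      nlinarith
  have hden : (Real.cosh (β*g))^2 ≤ Real.cosh (a + β*g) * Real.cosh (a - β*g) := by
    have e1 := Real.cosh_add a (β*g)
    have e2 := Real.cosh_sub a (β*g)
    have e3 := Real.cosh_two_mul a
    have e4 := Real.cosh_two_mul (β*g)
    have ca := Real.cosh_sq a
    have cx := Real.cosh_sq (β*g)
    have h1 : Real.cosh (a + β*g) * Real.cosh (a - β*g)
        = (Real.cosh (2*a) + Real.cosh (2*(β*g))) / 2 := by
      linear_combination (Real.cosh (a - β*g)) * e1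
        + (Real.cosh a * Real.cosh (β*g) + Real.sinh a * Real.sinh (β*g)) * e2
        - (1/2) * e3 - (1/2) * e4
        + (Real.sinh (β*g)^2 + 1/2) * ca + (Real.cosh a^2 - 1/2) * cx
    have h2 : (Real.cosh (β*g))^2 = (1 + Real.cosh (2*(β*g))) / 2 := by
      linarith [e4, cx]
    rw [h1, h2]
    have := Real.one_le_cosh (2*a)
    linarith
  calc g * (Real.tanh (a + β*g) - Real.tanh (a - β*g))
      = g * Real.sinh (2*(β*g)) / (Real.cosh (a + β*g) * Real.cosh (a - β*g)) := by
        rw [hsub]; ring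
    _ ≤ g * Real.sinh (2*(β*g)) / (Real.cosh (β*g))^2 := by
        gcongr
    _ = 2 * (g * Real.tanh (β*g)) := hrhs.symm

lemma spin_pm {V : Type} (σ : V → Bool) (B : Finset V) :
    sigmaSet σ B = 1 ∨ sigmaSet σ B = -1 := by
  classical
  induction B using Finset.induction_on with
  | empty => left; simp [sigmaSet]
  | @insert a s ha ih =>
    rw [sigmaSet, Finset.prod_insert ha]
    have hs : spinVal (σ a) = 1 ∨ spinVal (σ a) = -1 := by
      cases σ a <;> simp [spinVal]
    rcases hs with h | h <;> rcases ih with h' | h' <;>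
      rw [sigmaSet] at h' <;> rw [h, h'] <;> norm_num

set_option maxHeartbeats 1000000 in
lemma gibbs_eq_tanh {V : Type} [Fintype V] [DecidableEq V] (ℬ : Finset (Finset V)) (β : ℝ)
    (A : Finset V) (hA : A ∈ ℬ) (hAne : A.Nonempty) (J : ℬ → ℝ) :
    ∃ h : ℝ, ∀ x : ℝ,
      gibbsAvg β ℬ (Function.update J ⟨A, hA⟩ x) A = Real.tanh (β * x + h) := by
  classical
  set A' : {B // B ∈ ℬ} := ⟨A, hA⟩ with hA'def
  set C : (V → Bool) → ℝ :=
    fun σ => ∑ B ∈ (univ : Finset {B // B ∈ ℬ}) \ {A'}, J B * sigmaSet σ (B : Finset V)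
    with hCdef
  set P := ∑ σ ∈ univ.filter (fun σ : V → Bool => sigmaSet σ A = 1), Real.exp (β * C σ)
    with hPdef
  set Q := ∑ σ ∈ univ.filter (fun σ : V → Bool => ¬ sigmaSet σ A = 1), Real.exp (β * C σ)
    with hQdef
  have hPpos : 0 < P := by
    apply Finset.sum_pos (fun i _ => Real.exp_pos _)
    refine ⟨fun _ => true, ?_⟩
    rw [Finset.mem_filter]; simp [sigmaSet, spinVal]
  have hQpos : 0 < Q := by
    apply Finset.sum_pos (fun i _ => Real.exp_pos _)
    obtain ⟨i, hi⟩ := hAne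
    refine ⟨fun j => decide (j ≠ i), ?_⟩
    simp only [Finset.mem_filter, Finset.mem_univ, true_and]
    have h : sigmaSet (fun j => decide (j ≠ i)) A = -1 := by
      rw [sigmaSet, Finset.prod_eq_single_of_mem i hi ?_]
      · simp [spinVal]
      · intro b _ hbi; simp [spinVal, hbi]
    rw [h]; norm_num
  refine ⟨(Real.log P - Real.log Q)/2, fun x => ?_⟩
  have hsum : ∀ σ : V → Bool,
      (∑ B : {B // B ∈ ℬ}, Function.update J A' x B * sigmaSet σ (B : Finset V))
        = x * sigmaSet σ A + C σ := by
    intro σ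
    have he : (fun B : {B // B ∈ ℬ} => Function.update J A' x B * sigmaSet σ (B : Finset V))
        = Function.update (fun B : {B // B ∈ ℬ} => J B * sigmaSet σ (B : Finset V)) A'
            (x * sigmaSet σ A) := by
      funext B
      rcases eq_or_ne B A' with hB | hB
      · subst hB; simp only [Function.update_self]; rfl
      · simp [Function.update_of_ne hB]
    rw [he, Finset.sum_update_of_mem (Finset.mem_univ A')]
  have hterm : ∀ σ : V → Bool,
      Real.exp (β * ∑ B : {B // B ∈ ℬ}, Function.update J A' x B * sigmaSet σ (B : Finset V))
        = Real.exp (β * x * sigmaSet σ A) * Real.exp (β * C σ) := by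
    intro σ
    rw [hsum σ, ← Real.exp_add]
    congr 1; ring
  have hnum : (∑ σ : V → Bool, sigmaSet σ A *
        Real.exp (β * ∑ B : {B // B ∈ ℬ}, Function.update J A' x B * sigmaSet σ (B : Finset V)))
      = Real.exp (β*x) * P - Real.exp (-(β*x)) * Q := by
    rw [← Finset.sum_filter_add_sum_filter_not univ (fun σ : V → Bool => sigmaSet σ A = 1)]
    have h1 : ∑ σ ∈ univ.filter (fun σ : V → Bool => sigmaSet σ A = 1),
        sigmaSet σ A * Real.exp (β * ∑ B : {B // B ∈ ℬ},
          Function.update J A' x B * sigmaSet σ (B : Finset V))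
        = Real.exp (β*x) * P := by
      rw [hPdef, Finset.mul_sum]
      apply Finset.sum_congr rfl
      intro σ hσ
      rw [Finset.mem_filter] at hσ
      rw [hterm σ, hσ.2]
      ring_nf
    have h2 : ∑ σ ∈ univ.filter (fun σ : V → Bool => ¬ sigmaSet σ A = 1),
        sigmaSet σ A * Real.exp (β * ∑ B : {B // B ∈ ℬ},
          Function.update J A' x B * sigmaSet σ (B : Finset V))
        = -(Real.exp (-(β*x)) * Q) := by
      rw [hQdef, Finset.mul_sum, ← Finset.sum_neg_distrib]
      apply Finset.sum_congr rfl
      intro σ hσ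
      rw [Finset.mem_filter] at hσ
      have hm1 : sigmaSet σ A = -1 := (spin_pm σ A).resolve_left hσ.2
      rw [hterm σ, hm1]
      ring_nf
    rw [h1, h2]; ring
  have hden : (∑ σ : V → Bool,
        Real.exp (β * ∑ B : {B // B ∈ ℬ}, Function.update J A' x B * sigmaSet σ (B : Finset V)))
      = Real.exp (β*x) * P + Real.exp (-(β*x)) * Q := by
    rw [← Finset.sum_filter_add_sum_filter_not univ (fun σ : V → Bool => sigmaSet σ A = 1)]
    have h1 : ∑ σ ∈ univ.filter (fun σ : V → Bool => sigmaSet σ A = 1),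
        Real.exp (β * ∑ B : {B // B ∈ ℬ},
          Function.update J A' x B * sigmaSet σ (B : Finset V))
        = Real.exp (β*x) * P := by
      rw [hPdef, Finset.mul_sum]
      apply Finset.sum_congr rfl
      intro σ hσ
      rw [Finset.mem_filter] at hσ
      rw [hterm σ, hσ.2]
      ring_nf
    have h2 : ∑ σ ∈ univ.filter (fun σ : V → Bool => ¬ sigmaSet σ A = 1),
        Real.exp (β * ∑ B : {B // B ∈ ℬ},
          Function.update J A' x B * sigmaSet σ (B : Finset V))
        = Real.exp (-(β*x)) * Q := by
      rw [hQdef, Finset.mul_sum]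
      apply Finset.sum_congr rfl
      intro σ hσ
      rw [Finset.mem_filter] at hσ
      have hm1 : sigmaSet σ A = -1 := (spin_pm σ A).resolve_left hσ.2
      rw [hterm σ, hm1]
      ring_nf
    rw [h1, h2]
  have hE : Real.exp (β*x) * Real.exp (-(β*x)) = 1 := by
    rw [← Real.exp_add]; simp
  have h2u : Real.exp (2*(β * x + (Real.log P - Real.log Q)/2))
      = Real.exp (β*x) * Real.exp (β*x) * P / Q := by
    rw [show 2*(β * x + (Real.log P - Real.log Q)/2)
        = (β*x + β*x + Real.log P) - Real.log Q by ring,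
      Real.exp_sub, Real.exp_add, Real.exp_add, Real.exp_log hPpos, Real.exp_log hQpos]
  rw [gibbsAvg, hnum, hden, tanh_eq_ratio, h2u]
  have hDpos : (0:ℝ) < Real.exp (β*x) * P + Real.exp (-(β*x)) * Q := by positivity
  have hD2 : (0:ℝ) < Real.exp (β*x) * Real.exp (β*x) * P / Q + 1 := by positivity
  rw [div_eq_div_iff hDpos.ne' hD2.ne']
  field_simp
  ring_nf
  linear_combination (-2 * Real.exp (β*x) * P * Q) * hE


lemma pi_map_eval {ι : Type*} [Fintype ι] {α : ι → Type*} [∀ i, MeasurableSpace (α i)]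
    (μ : ∀ i, Measure (α i)) [∀ i, IsProbabilityMeasure (μ i)] (i : ι) :
    (Measure.pi μ).map (Function.eval i) = μ i := by
  classical
  ext s hs
  rw [Measure.map_apply (measurable_pi_apply i) hs, ← Set.univ_pi_update_univ, Measure.pi_pi]
  rw [Fintype.prod_eq_single i ?_]
  · simp
  · intro j hj
    simp [Function.update_of_ne hj]

lemma measurePreserving_piMap {ι : Type*} [Fintype ι] {α : ι → Type*}
    [∀ i, MeasurableSpace (α i)] (μ : ∀ i, Measure (α i)) [∀ i, IsProbabilityMeasure (μ i)]
    (φ : ∀ i, α i → α i) (hφ : ∀ i, Measurable (φ i)) (hpres : ∀ i, (μ i).map (φ i) = μ i) :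
    MeasurePreserving (fun J i => φ i (J i)) (Measure.pi μ) (Measure.pi μ) := by
  have hmeas : Measurable (fun (J : ∀ i, α i) i => φ i (J i)) :=
    measurable_pi_lambda _ (fun i => (hφ i).comp (measurable_pi_apply i))
  refine ⟨hmeas, ?_⟩
  refine (Measure.pi_eq fun s hs => ?_).symm
  rw [Measure.map_apply hmeas (MeasurableSet.univ_pi hs)]
  have hpre : (fun (J : ∀ i, α i) i => φ i (J i)) ⁻¹' (Set.univ.pi s)
      = Set.univ.pi (fun i => φ i ⁻¹' s i) := by
    ext J; simp [Set.mem_pi]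
  rw [hpre, Measure.pi_pi]
  refine Finset.prod_congr rfl fun i _ => ?_
  rw [← Measure.map_apply (hφ i) (hs i), hpres i]

lemma integrable_id_gaussianReal (m : ℝ) {v : NNReal} (hv : v ≠ 0) :
    Integrable (fun x => x) (gaussianReal m v) := by
  rw [gaussianReal_of_var_ne_zero m hv]
  rw [integrable_withDensity_iff (measurable_gaussianPDF m v)
    (Filter.Eventually.of_forall fun x => ENNReal.ofReal_lt_top)]
  have hvpos : (0:ℝ) < (v:ℝ) := by
    have := hv
    positivity
  have hb : (0:ℝ) < (2 * (v:ℝ))⁻¹ := by positivity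
  set c : ℝ := (Real.sqrt (2 * π * v))⁻¹ with hc
  set b : ℝ := (2 * (v:ℝ))⁻¹ with hbdef
  have g1 : Integrable (fun y : ℝ => y * Real.exp (-b * y^2)) := by
    have := integrable_rpow_mul_exp_neg_mul_sq hb (s := 1) (by norm_num)
    simpa [Real.rpow_one] using this
  have g2 : Integrable (fun y : ℝ => m * Real.exp (-b * y^2)) :=
    (integrable_exp_neg_mul_sq hb).const_mul m
  have hG : Integrable (fun y : ℝ => c * ((y + m) * Real.exp (-b * y^2))) := by
    have := (g1.add g2).const_mul c
    refine this.congr (Filter.Eventually.of_forall fun y => ?_)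
    simp only [Pi.add_apply]
    ring
  have hGc := hG.comp_sub_right m
  refine hGc.congr (Filter.Eventually.of_forall fun x => ?_)
  have hnn : 0 ≤ gaussianPDFReal m v x := gaussianPDFReal_nonneg m v x
  show c * ((x - m + m) * rexp (-b * (x - m) ^ 2)) = x * (gaussianPDF m v x).toReal
  rw [show gaussianPDF m v x = ENNReal.ofReal (gaussianPDFReal m v x) from rfl,
    ENNReal.toReal_ofReal hnn, gaussianPDFReal]
  have harg : -b * (x - m)^2 = -(x - m)^2 / (2 * (v:ℝ)) := by
    rw [hbdef]; field_simp
  rw [← harg]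
  ring

lemma continuous_tanh' : Continuous Real.tanh := by
  have h : Real.tanh = fun x => Real.sinh x / Real.cosh x :=
    funext Real.tanh_eq_sinh_div_cosh
  rw [h]
  exact Real.continuous_sinh.div Real.continuous_cosh (fun x => (Real.cosh_pos x).ne')

set_option maxHeartbeats 1000000 in
/-- **Gaussian couplings.** If every `J_B` is independently Gaussian, `J_B ~ N(J_{0,B}, Λ_B²)`,
then `E[(J_{0,A} - J_A) ⟨σ_A⟩_J] ≥ E[-J tanh(βJ)]_{N(0, Λ_A²)}`, the right-hand side being
independent of all the means and of all the other interactions. -/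
theorem gaussian_local_energy_lower_bound
    {V : Type} [Fintype V] [DecidableEq V]
    (ℬ : Finset (Finset V)) (hℬ : ∀ B ∈ ℬ, B.Nonempty)
    (β : ℝ) (hβ : 0 < β)
    (J0 : Finset V → ℝ) (Λ : Finset V → NNReal) (hΛ : ∀ B, 0 < Λ B)
    (A : Finset V) (hA : A ∈ ℬ) :
    ∫ J, (J0 A - J ⟨A, hA⟩) * gibbsAvg β ℬ J A ∂(gaussQuenched ℬ J0 Λ)
      ≥ ∫ x, -x * Real.tanh (β * x) ∂(gaussianReal 0 (Λ A ^ 2)) := by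
  classical
  set A' : {B // B ∈ ℬ} := ⟨A, hA⟩ with hA'def
  set m := J0 A with hm
  set v : NNReal := Λ A ^ 2 with hv
  have hvne : v ≠ 0 := pow_ne_zero 2 (hΛ A).ne'
  set μ := gaussQuenched ℬ J0 Λ with hμ
  have hμpi : μ = Measure.pi (fun B : {B // B ∈ ℬ} => gaussianReal (J0 B) (Λ B ^ 2)) := rfl
  haveI : IsProbabilityMeasure μ := by
    rw [hμpi]; infer_instance
  -- measurability of the Gibbs average
  have hFmeas : Measurable (fun J : {B // B ∈ ℬ} → ℝ => gibbsAvg β ℬ J A) := by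
    unfold gibbsAvg
    fun_prop
  have hFbdd : ∀ J : {B // B ∈ ℬ} → ℝ, |gibbsAvg β ℬ J A| ≤ 1 := by
    intro J
    obtain ⟨h, hh⟩ := gibbs_eq_tanh ℬ β A hA (hℬ A hA) J
    have h2 := hh (J ⟨A, hA⟩)
    rw [Function.update_eq_self] at h2
    rw [h2]
    exact abs_tanh_le_one _
  -- the reflection map
  set φr : ∀ _ : {B // B ∈ ℬ}, ℝ → ℝ := fun B y => if B = A' then 2*m - y else y with hφr
  have hφmeas : ∀ B, Measurable (φr B) := by
    intro B
    by_cases hB : B = A' <;> simp only [hφr, hB, if_true, if_false] <;> fun_prop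
  have hφpres : ∀ B : {B // B ∈ ℬ},
      (gaussianReal (J0 B) (Λ (B : Finset V) ^ 2)).map (φr B)
        = gaussianReal (J0 B) (Λ (B : Finset V) ^ 2) := by
    intro B
    by_cases hB : B = A'
    · subst hB
      simp only [hφr, if_true, eq_self_iff_true]
      have h1 : (fun y : ℝ => 2*m - y) = (fun y : ℝ => y + 2*m) ∘ (fun y : ℝ => (-1) * y) := by
        funext y; simp [Function.comp]; ring
      rw [h1, ← Measure.map_map (measurable_add_const (2*m)) (measurable_const_mul (-1)),
        gaussianReal_map_const_mul, gaussianReal_map_add_const]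
      congr 1
      · show (-1) * J0 A + 2 * m = J0 A
        rw [hm]; ring
      · refine NNReal.eq ?_
        push_cast
        norm_num
    · simp only [hφr, if_neg hB]
      exact Measure.map_id'
  set T : ({B // B ∈ ℬ} → ℝ) → ({B // B ∈ ℬ} → ℝ) := fun J B => φr B (J B) with hT
  have hTpres : MeasurePreserving T μ μ := by
    rw [hμpi]
    exact measurePreserving_piMap _ φr hφmeas hφpres
  have hTmeas : Measurable T := hTpres.measurable
  -- integrability facts
  have hmapA : μ.map (Function.eval A') = gaussianReal (J0 A) (Λ A ^ 2) := by
    rw [hμpi]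
    exact pi_map_eval _ A'
  have hevalInt : Integrable (fun J : {B // B ∈ ℬ} → ℝ => J A') μ := by
    have h0 : Integrable (fun x : ℝ => x) (μ.map (Function.eval A')) := by
      rw [hmapA]
      exact integrable_id_gaussianReal _ hvne
    exact (integrable_map_measure h0.aestronglyMeasurable
      (measurable_pi_apply A').aemeasurable).mp h0
  have hconstInt : Integrable (fun _ : {B // B ∈ ℬ} → ℝ => m) μ := integrable_const m
  have hfasm : AEStronglyMeasurable (fun J : {B // B ∈ ℬ} → ℝ =>
      (m - J A') * gibbsAvg β ℬ J A) μ :=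
    ((measurable_const.sub (measurable_pi_apply A')).mul hFmeas).aestronglyMeasurable
  have hfInt : Integrable (fun J : {B // B ∈ ℬ} → ℝ => (m - J A') * gibbsAvg β ℬ J A) μ := by
    have h1 := (hconstInt.sub hevalInt).bdd_mul hFmeas.aestronglyMeasurable
      (c := 1) (Filter.Eventually.of_forall fun J => by simpa [Real.norm_eq_abs] using hFbdd J)
    exact h1.congr (Filter.Eventually.of_forall fun J => by simp only [Pi.sub_apply]; ring)
  have hfTInt : Integrable (fun J : {B // B ∈ ℬ} → ℝ =>
      (m - (T J) A') * gibbsAvg β ℬ (T J) A) μ :=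
    (hTpres.integrable_comp hfasm).mpr hfInt
  have htanhmeas : AEStronglyMeasurable (fun J : {B // B ∈ ℬ} → ℝ =>
      -Real.tanh (β * (J A' - m))) μ :=
    (((continuous_tanh'.measurable.comp
      (by fun_prop : Measurable fun J : {B // B ∈ ℬ} → ℝ => β * (J A' - m))).neg)).aestronglyMeasurable
  have hRInt : Integrable (fun J : {B // B ∈ ℬ} → ℝ =>
      -(J A' - m) * Real.tanh (β * (J A' - m))) μ := by
    have h1 := (hevalInt.sub hconstInt).bdd_mul htanhmeas
      (c := 1) (Filter.Eventually.of_forall fun J => by simpa [Real.norm_eq_abs] using abs_tanh_le_one (β * (J A' - m)))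
    exact h1.congr (Filter.Eventually.of_forall fun J => by simp only [Pi.sub_apply]; ring)
  -- pointwise two-point inequality
  have hpoint : ∀ J : {B // B ∈ ℬ} → ℝ,
      2 * (-(J A' - m) * Real.tanh (β * (J A' - m)))
        ≤ (m - J A') * gibbsAvg β ℬ J A + (m - (T J) A') * gibbsAvg β ℬ (T J) A := by
    intro J
    obtain ⟨h, hh⟩ := gibbs_eq_tanh ℬ β A hA (hℬ A hA) J
    set g := J A' - m with hg
    have hJA : J A' = m + g := by rw [hg]; ring
    have hJup : J = Function.update J A' (m + g) := by
      rw [← hJA]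
      exact (Function.update_eq_self _ _).symm
    have hTJup : T J = Function.update J A' (m - g) := by
      funext B
      by_cases hB : B = A'
      · subst hB
        simp only [hT, hφr, if_true, eq_self_iff_true, Function.update_self]
        rw [hJA]; ring
      · simp only [hT, hφr, if_neg hB, Function.update_of_ne hB]
    have hTA : (T J) A' = m - g := by rw [hTJup, Function.update_self]
    have e1 : gibbsAvg β ℬ J A = Real.tanh (β * (m + g) + h) := by
      conv_lhs => rw [hJup]
      exact hh (m + g)
    have e2 : gibbsAvg β ℬ (T J) A = Real.tanh (β * (m - g) + h) := by
      rw [hTJup]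
      exact hh (m - g)
    have key := tanh_two_point hβ (β * m + h) g
    have a1 : β * (m + g) + h = (β*m + h) + β*g := by ring
    have a2 : β * (m - g) + h = (β*m + h) - β*g := by ring
    have hmg : m - J A' = -g := by rw [hJA]; ring
    rw [e1, e2, hTA, a1, a2, hmg]
    have hmm : m - (m - g) = g := by ring
    rw [hmm]
    nlinarith [key]
  -- reflection identity for the integral
  have step1 : ∫ J, (m - J A') * gibbsAvg β ℬ J A ∂μ
      = ∫ J, (m - (T J) A') * gibbsAvg β ℬ (T J) A ∂μ := by
    conv_lhs => rw [← hTpres.map_eq]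
    rw [integral_map hTmeas.aemeasurable (by rw [hTpres.map_eq]; exact hfasm)]
  have step2 : ∫ J, 2 * (-(J A' - m) * Real.tanh (β * (J A' - m))) ∂μ
      ≤ ∫ J, ((m - J A') * gibbsAvg β ℬ J A + (m - (T J) A') * gibbsAvg β ℬ (T J) A) ∂μ :=
    integral_mono (hRInt.const_mul 2) (hfInt.add hfTInt) hpoint
  rw [integral_add hfInt hfTInt, ← step1, integral_const_mul] at step2
  -- identify the RHS integral
  have hmap0 : μ.map (fun J : {B // B ∈ ℬ} → ℝ => J A' - m) = gaussianReal 0 v := by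
    have hcomp : (fun J : {B // B ∈ ℬ} → ℝ => J A' - m)
        = (fun x : ℝ => x + (-m)) ∘ (Function.eval A') := by
      funext J; simp [Function.comp, sub_eq_add_neg]
    rw [hcomp, ← Measure.map_map (measurable_add_const (-m)) (measurable_pi_apply A'),
      hmapA, gaussianReal_map_add_const]
    rw [hm]
    norm_num
    rfl
  have hRHS : ∫ x, -x * Real.tanh (β * x) ∂(gaussianReal 0 v)
      = ∫ J, -(J A' - m) * Real.tanh (β * (J A' - m)) ∂μ := by
    rw [← hmap0]
    rw [integral_map (by fun_prop : Measurable fun J : {B // B ∈ ℬ} → ℝ => J A' - m).aemeasurable]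
    exact (continuous_neg.mul (continuous_tanh'.comp
      (continuous_const.mul continuous_id))).aestronglyMeasurable
  show ∫ J, (m - J A') * gibbsAvg β ℬ J A ∂μ ≥ ∫ x, -x * Real.tanh (β * x) ∂(gaussianReal 0 v)
  rw [ge_iff_le, hRHS]
  linarith [step2]
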